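/- For all k ≥ 1, α ≥ 1, and t ≥ 0, U^k(ℤ_{2^α}) ≅ U^{k+t}(ℤ_{2^{α+2t}}). -/

import Mathlib

/-- Cyclic factors of the group of units of `ZMod (p^a)` (Lemma int1). -/
noncomputable def pUnitsList (p a : ℕ) : List ℕ :=
  if p = 2 then (if 2 ≤ a then [2, 2 ^ (a - 2)] else [1]) else [p - 1, p ^ (a - 1)]

/-- Cyclic factors of `U(ZMod n)`, via the prime-power factorization of `n`. -/
noncomputable def unitsList (n : ℕ) : List ℕ :=
  (Nat.factorization n).support.toList.flatMap fun p => pUnitsList p (Nat.factorization n p)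

/-- One application of the units functor to a product of cyclic rings. -/
noncomputable def uStep (l : List ℕ) : List ℕ := l.flatMap unitsList

/-- Cyclic factors of the k-th iterated group of units `U^k(ZMod n)`. -/
noncomputable def UkList (k n : ℕ) : List ℕ := uStep^[k] [n]

/-- The k-th iterated group of units `U^k(ZMod n)`, as the product of its cyclic factors. -/
abbrev Uk (k n : ℕ) : Type := ∀ i : Fin (UkList k n).length, ZMod ((UkList k n).get i)

lemma unitsList_two_pow (m : ℕ) (hm : 2 ≤ m) : unitsList (2 ^ m) = [2, 2 ^ (m - 2)] := by
  have h := Nat.Prime.factorization_pow (p := 2) (k := m) Nat.prime_two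
  simp only [unitsList, h]
  rw [Finsupp.support_single_ne_zero _ (by omega)]
  simp [pUnitsList, hm]

lemma unitsList_two : unitsList 2 = [1] := by
  have h1 := Nat.Prime.factorization_pow (p := 2) (k := 1) Nat.prime_two
  simp only [unitsList]
  rw [show (2 : ℕ) = 2 ^ 1 by norm_num, h1,
    Finsupp.support_single_ne_zero _ (by omega)]
  simp [pUnitsList]

lemma unitsList_one : unitsList 1 = [] := by
  simp [unitsList]

lemma uStep_nil : uStep [] = [] := rfl

lemma uStep_iter_nil (k : ℕ) : uStep^[k] ([] : List ℕ) = [] := by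
  induction k with
  | zero => rfl
  | succ n ih => rw [Function.iterate_succ_apply, uStep_nil, ih]

lemma uStep_append (l1 l2 : List ℕ) : uStep (l1 ++ l2) = uStep l1 ++ uStep l2 := by
  simp [uStep]

lemma uStep_iter_append (k : ℕ) (l1 l2 : List ℕ) :
    uStep^[k] (l1 ++ l2) = uStep^[k] l1 ++ uStep^[k] l2 := by
  induction k generalizing l1 l2 with
  | zero => rfl
  | succ n ih => rw [Function.iterate_succ_apply, uStep_append, ih,
      Function.iterate_succ_apply, Function.iterate_succ_apply]

lemma uStep_iter_two (k : ℕ) : uStep^[k + 2] [2] = [] := by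
  have h1 : uStep [2] = [1] := by simp [uStep, unitsList_two]
  have h2 : uStep [1] = [] := by simp [uStep, unitsList_one]
  rw [Function.iterate_succ_apply, Function.iterate_succ_apply, h1, h2, uStep_iter_nil]

lemma pi_eq_of_eq {l1 l2 : List ℕ} (h : l1 = l2) :
    Nonempty ((∀ i : Fin l1.length, ZMod (l1.get i)) ≃+ ∀ i : Fin l2.length, ZMod (l2.get i)) := by
  subst h; exact ⟨AddEquiv.refl _⟩

lemma cons_one_equiv (L : List ℕ) :
    Nonempty ((∀ i : Fin ((1 :: L : List ℕ)).length, ZMod ((1 :: L : List ℕ).get i)) ≃+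
      ∀ i : Fin L.length, ZMod (L.get i)) := by
  refine ⟨{ toFun := fun f i => f i.succ,
            invFun := fun g => Fin.cons (0 : ZMod 1) g,
            left_inv := ?_, right_inv := ?_, map_add' := fun _ _ => rfl }⟩
  · intro f
    funext i
    refine Fin.cases ?_ ?_ i
    · exact @Subsingleton.elim (ZMod 1) (by infer_instance) _ _
    · intro j
      rfl
  · intro g
    funext i
    rfl

lemma key (k α : ℕ) (hk : 1 ≤ k) (hα : 1 ≤ α) :
    Nonempty (Uk k (2 ^ α) ≃+ Uk (k + 1) (2 ^ (α + 2))) := by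
  have hu : uStep [2 ^ (α + 2)] = [2] ++ [2 ^ α] := by
    simp [uStep, unitsList_two_pow (α + 2) (by omega)]
  have hlist : UkList (k + 1) (2 ^ (α + 2)) = uStep^[k] [2] ++ UkList k (2 ^ α) := by
    rw [UkList, Function.iterate_succ_apply, hu, uStep_iter_append, UkList]
  rcases Nat.exists_eq_add_of_le hk with ⟨j, rfl⟩
  match j with
  | 0 =>
    have h2 : uStep^[1] [2] = [1] := by simp [uStep, unitsList_two]
    have : UkList (1 + 1) (2 ^ (α + 2)) = 1 :: UkList 1 (2 ^ α) := by
      rw [hlist, h2]; rfl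
    obtain ⟨e⟩ := cons_one_equiv (UkList 1 (2 ^ α))
    obtain ⟨e2⟩ := pi_eq_of_eq this
    exact ⟨(e2.trans e).symm⟩
  | j + 1 =>
    have : UkList (1 + (j + 1) + 1) (2 ^ (α + 2)) = UkList (1 + (j + 1)) (2 ^ α) := by
      rw [hlist, show 1 + (j + 1) = j + 2 by omega, uStep_iter_two]
      rfl
    exact (pi_eq_of_eq this.symm)

theorem stmt_3 (k α t : ℕ) (hk : 1 ≤ k) (hα : 1 ≤ α) :
    Nonempty (Uk k (2 ^ α) ≃+ Uk (k + t) (2 ^ (α + 2 * t))) := by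
  induction t with
  | zero => simpa using ⟨AddEquiv.refl (Uk k (2 ^ α))⟩
  | succ n ih =>
    obtain ⟨e⟩ := ih
    obtain ⟨f⟩ := key (k + n) (α + 2 * n) (by omega) (by omega)
    have h1 : k + (n + 1) = k + n + 1 := by omega
    have h2 : α + 2 * (n + 1) = α + 2 * n + 2 := by omega
    rw [h1, h2]
    exact ⟨e.trans f⟩
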